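/- Let F be a field, k ≥ 2, 1 ≤ h ≤ k-1, and let α₁,…,α_{k-1} ∈ F be pairwise distinct. Set q(x) = x^{h-1} + ∑_{t=0}^{l} η_t x^{k+t-1} and g(x) = ∏_{i=1}^{k-1}(x - αᵢ), and write q(x) mod g(x) = r(x) = ∑_{i=0}^{k-2} rᵢ xⁱ. Let à be the (k-1)×(k-1) matrix whose rows are (α₁^{s},…,α_{k-1}^{s}) for s = 0,…,k-2 except that row h (power index h-1 replaced) is (q(α₁),…,q(α_{k-1})). Then det(Ã) = r_{h-1} · ∏_{1≤i<j≤k-1}(αⱼ - αᵢ). In particular à is invertible iff r_{h-1} ≠ 0. -/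

import Mathlib

open Polynomial in
theorem stmt_12 {F : Type*} [Field F] (k l h : ℕ) (hk : 2 ≤ k)
    (hh1 : 1 ≤ h) (hh2 : h ≤ k - 1) (α : Fin (k - 1) → F)
    (hα : Function.Injective α) (η : ℕ → F)
    (q g : Polynomial F)
    (hq : q = X ^ (h - 1) + ∑ t ∈ Finset.range (l + 1), C (η t) * X ^ (k + t - 1))
    (hg : g = ∏ i, (X - C (α i)))
    (A : Matrix (Fin (k - 1)) (Fin (k - 1)) F)
    (hA : ∀ s j, A s j = if (s : ℕ) = h - 1 then q.eval (α j) else α j ^ (s : ℕ)) :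
    A.det = (q %ₘ g).coeff (h - 1) *
        ∏ m : Fin (k - 1), ∏ j ∈ Finset.Ioi m, (α j - α m)
    ∧ (A.det ≠ 0 ↔ (q %ₘ g).coeff (h - 1) ≠ 0) := by
  have hk1 : 1 ≤ k - 1 := by omega
  have hmonic : g.Monic := by
    rw [hg]; exact monic_prod_of_monic _ _ fun i _ => monic_X_sub_C _
  have hgdeg : g.natDegree = k - 1 := by
    rw [hg, natDegree_prod _ _ fun i _ => X_sub_C_ne_zero _]
    simp
  have hg1 : g ≠ 1 := by
    intro hg1
    rw [hg1, natDegree_one] at hgdeg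
    omega
  set r : Polynomial F := q %ₘ g with hr
  have hrdeg : r.natDegree < k - 1 := hgdeg ▸ natDegree_modByMonic_lt q hmonic hg1
  -- evaluation of q at α j equals evaluation of r
  have heval : ∀ j, q.eval (α j) = r.eval (α j) := by
    intro j
    conv_lhs => rw [← modByMonic_add_div q g]
    have : g.eval (α j) = 0 := by
      rw [hg, eval_prod]
      exact Finset.prod_eq_zero (Finset.mem_univ j) (by simp)
    simp [this, hr]
  have hrep : ∀ j, r.eval (α j) = ∑ i : Fin (k - 1), r.coeff i * α j ^ (i : ℕ) := by
    intro j
    rw [eval_eq_sum_range' hrdeg, Finset.sum_range fun i => r.coeff i * α j ^ i]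
  set V : Matrix (Fin (k - 1)) (Fin (k - 1)) F := (Matrix.vandermonde α).transpose with hV
  have hj0 : h - 1 < k - 1 := by omega
  set j0 : Fin (k - 1) := ⟨h - 1, hj0⟩ with hj0'
  have hAV : A = V.updateRow j0 (∑ i : Fin (k - 1), r.coeff i • V i) := by
    ext s j
    rw [hA]
    by_cases hs : s = j0
    · subst hs
      simp only [Matrix.updateRow_self]
      rw [if_pos (by trivial), heval, hrep]
      simp [hV, Matrix.vandermonde]
    · rw [Matrix.updateRow_ne hs, if_neg (by
        intro hcon
        exact hs (Fin.ext hcon))]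
      simp [hV, Matrix.vandermonde]
  have hdet : A.det = r.coeff (h - 1) * ∏ m : Fin (k - 1), ∏ j ∈ Finset.Ioi m, (α j - α m) := by
    rw [hAV, Matrix.det_updateRow_sum V j0 fun i => r.coeff i]
    rw [smul_eq_mul, hV, Matrix.det_transpose, Matrix.det_vandermonde]
  refine ⟨hdet, ?_⟩
  have hprod : (∏ m : Fin (k - 1), ∏ j ∈ Finset.Ioi m, (α j - α m)) ≠ 0 := by
    apply Finset.prod_ne_zero_iff.2
    intro m _
    apply Finset.prod_ne_zero_iff.2
    intro j hj
    exact sub_ne_zero_of_ne (fun hc => (Finset.mem_Ioi.1 hj).ne' (hα hc))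
  rw [hdet]
  constructor
  · intro hne hc; exact hne (by rw [hc, zero_mul])
  · intro hne; exact mul_ne_zero hne hprod
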